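/- (Average Shapley value proposition) Let X be a finite set of n species, 𝔽 a finite set of features with every feature carried by at least one species, α : X → 2^𝔽, and ν : 𝔽 → ℝ≥0. For f ∈ 𝔽 let N(f) be the number of species carrying f, and for x ∈ X let ψ̄_x = Σ_{f ∈ α(x)} ν(f)/N(f). Then the average of ψ̄_x over all species equals the total feature diversity divided by n: (1/n) · Σ_{x ∈ X} ψ̄_x = (1/n) · Σ_{f ∈ 𝔽} ν(f). In particular this average is independent of how the features are distributed across the species. -/
import Mathlib

open Finset

/-- Average Shapley value proposition: if every feature is carried by at least one of the
`n ≥ 1` species, then the average over all species of `ψ̄_x = Σ_{f ∈ α(x)} ν(f)/N(f)`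
equals `(1/n) · Σ_f ν(f)`, independently of how features are distributed. -/
theorem avg_shapley_value {X 𝔽 : Type*} [Fintype X] [DecidableEq X]
    [Fintype 𝔽] [DecidableEq 𝔽]
    (α : X → Finset 𝔽) (ν : 𝔽 → ℝ) (hν : ∀ f, 0 ≤ ν f)
    (hn : 1 ≤ Fintype.card X)
    (hN : ∀ f : 𝔽, 1 ≤ (Finset.univ.filter (fun x => f ∈ α x)).card) :
    (1 / (Fintype.card X : ℝ)) *
        ∑ x : X, ∑ f ∈ α x, ν f / ((Finset.univ.filter (fun y => f ∈ α y)).card : ℝ)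
      = (1 / (Fintype.card X : ℝ)) * ∑ f : 𝔽, ν f := by
  congr 1
  rw [Finset.sum_comm' (s := Finset.univ) (t := α) (t' := Finset.univ)
      (s' := fun f => Finset.univ.filter (fun y => f ∈ α y)) (by simp)]
  refine Finset.sum_congr rfl fun f _ => ?_
  rw [Finset.sum_const, nsmul_eq_mul]
  have h : ((Finset.univ.filter (fun y => f ∈ α y)).card : ℝ) ≠ 0 := by
    exact_mod_cast Nat.one_le_iff_ne_zero.mp (hN f)
  field_simp
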